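/- arXiv:0906.1099 — 2 statements merged into one kernel-verified Lean document; each statement's English description precedes it below -/
import Mathlib

section
/- For complex z with 0 < Re z < 1 and z ≠ 1 such that 2^{1−z} ≠ 1, the alternating series Σ_{n=1}^∞ (−1)^{n−1}/n^z converges and (1 − 2^{1−z})^{−1} Σ_{n=1}^∞ (−1)^{n−1}/n^z equals the analytic continuation ζ(z) of the Riemann zeta function. -/
open Finset Complex Filter

noncomputable def xiPartial (m : ℕ) (z : ℂ) : ℂ :=
  ∑ k ∈ Finset.Icc 1 m, (-1 : ℂ) ^ (k - 1) * (k : ℂ) ^ (-z)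

namespace EtaAux

/-- The alternating series terms, indexed from 0: `a z n = (-1)^n (n+1)^{-z}`. -/
noncomputable def a (z : ℂ) (n : ℕ) : ℂ := (-1 : ℂ) ^ n * ((n + 1 : ℕ) : ℂ) ^ (-z)

/-- Paired terms. -/
noncomputable def F (k : ℕ) (z : ℂ) : ℂ :=
  ((2 * k + 1 : ℕ) : ℂ) ^ (-z) - ((2 * k + 2 : ℕ) : ℂ) ^ (-z)

/-- The eta function as an absolutely convergent paired sum. -/
noncomputable def G (z : ℂ) : ℂ := ∑' k : ℕ, F k z

lemma F_eq (k : ℕ) (z : ℂ) : F k z = a z (2 * k) + a z (2 * k + 1) := by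
  have h1 : ((-1 : ℂ)) ^ (2 * k) = 1 := by rw [pow_mul]; norm_num
  have h2 : ((-1 : ℂ)) ^ (2 * k + 1) = -1 := by rw [pow_succ, h1]; ring
  have h3 : (2 * k + 1) + 1 = 2 * k + 2 := rfl
  simp only [F, a, h1, h2, h3, one_mul, neg_one_mul]
  ring

lemma norm_nat_cpow {n : ℕ} (hn : 0 < n) (z : ℂ) :
    ‖((n : ℂ)) ^ (-z)‖ = (n : ℝ) ^ (-z.re) := by
  rw [show ((n : ℂ)) = ((n : ℝ) : ℂ) by push_cast; ring]
  rw [Complex.norm_cpow_eq_rpow_re_of_pos (by exact_mod_cast hn)]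
  simp

lemma norm_a (z : ℂ) (n : ℕ) : ‖a z n‖ = ((n + 1 : ℕ) : ℝ) ^ (-z.re) := by
  rw [a, norm_mul, norm_pow, norm_neg, norm_one, one_pow, one_mul,
    norm_nat_cpow (Nat.succ_pos n)]

/-- Mean-value bound on the paired term. -/
lemma F_bound {z : ℂ} (hz : 0 < z.re) (k : ℕ) :
    ‖F k z‖ ≤ ‖z‖ * ((2 * k + 1 : ℝ)) ^ (-z.re - 1) := by
  set c : ℝ := (2 * k + 1 : ℝ) with hc
  have hc1 : (1 : ℝ) ≤ c := by
    rw [hc]; have := Nat.cast_nonneg (α := ℝ) k; linarith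
  have key : ∀ t ∈ Set.Icc c (c + 1),
      HasDerivWithinAt (fun t : ℝ => ((t : ℂ)) ^ (-z)) (-z * (t : ℂ) ^ (-z - 1))
        (Set.Icc c (c + 1)) t := by
    intro t ht
    have ht0 : (0 : ℝ) < t := lt_of_lt_of_le one_pos (le_trans hc1 ht.1)
    have h0 : ((t : ℂ)) ∈ Complex.slitPlane := by
      exact Or.inl (by simpa using ht0)
    have h := ((Complex.hasStrictDerivAt_cpow_const (c := -z) h0).hasDerivAt).comp_ofReal
    exact (h.congr_deriv (by ring)).hasDerivWithinAt
  have bound : ∀ t ∈ Set.Ico c (c + 1), ‖-z * (t : ℂ) ^ (-z - 1)‖ ≤ ‖z‖ * c ^ (-z.re - 1) := by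
    intro t ht
    have ht0 : (0 : ℝ) < t := lt_of_lt_of_le one_pos (le_trans hc1 ht.1)
    rw [norm_mul, norm_neg]
    gcongr
    rw [Complex.norm_cpow_eq_rpow_re_of_pos ht0]
    have : (-z - 1).re = -z.re - 1 := by simp
    rw [this]
    exact Real.rpow_le_rpow_of_nonpos (lt_of_lt_of_le one_pos hc1) ht.1 (by linarith)
  have := norm_image_sub_le_of_norm_deriv_le_segment' key bound (c + 1)
    (Set.right_mem_Icc.mpr (by linarith))
  simp only [add_sub_cancel_left, mul_one] at this
  have heq : F k z = ((c + 1 : ℝ) : ℂ) ^ (-z) - ((c : ℝ) : ℂ) ^ (-z) → True := fun _ => trivial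
  have h1 : ((2 * k + 1 : ℕ) : ℂ) = ((c : ℝ) : ℂ) := by rw [hc]; push_cast; ring
  have h2 : ((2 * k + 2 : ℕ) : ℂ) = (((c + 1 : ℝ)) : ℂ) := by rw [hc]; push_cast; ring
  calc ‖F k z‖ = ‖(((c + 1 : ℝ)) : ℂ) ^ (-z) - ((c : ℝ) : ℂ) ^ (-z)‖ := by
        rw [F, h1, h2, norm_sub_rev]
    _ ≤ ‖z‖ * c ^ (-z.re - 1) := this

lemma summable_bound {e : ℝ} (he : 0 < e) :
    Summable (fun k : ℕ => ((2 * k + 1 : ℝ)) ^ (-e - 1)) := by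
  have h : Summable (fun k : ℕ => ((k + 1 : ℝ)) ^ (-e - 1)) := by
    have h0 : Summable (fun n : ℕ => (n : ℝ) ^ (-e - 1)) :=
      Real.summable_nat_rpow.mpr (by linarith)
    have h1 := (summable_nat_add_iff (f := fun n : ℕ => (n : ℝ) ^ (-e - 1)) 1).mpr h0
    refine h1.congr fun n => ?_
    push_cast
    ring_nf
  refine h.of_nonneg_of_le (fun k => Real.rpow_nonneg (by positivity) _) (fun k => ?_)
  exact Real.rpow_le_rpow_of_nonpos (by positivity) (by push_cast; linarith) (by linarith)

lemma summable_F {z : ℂ} (hz : 0 < z.re) : Summable (fun k => F k z) := by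
  refine Summable.of_norm ?_
  exact Summable.of_nonneg_of_le (fun k => norm_nonneg _) (fun k => F_bound hz k)
    ((summable_bound hz).mul_left ‖z‖)

/-- `G` is differentiable on the right half-plane. -/
lemma differentiableAt_G {z : ℂ} (hz : 0 < z.re) : DifferentiableAt ℂ G z := by
  set U : Set ℂ := {s | z.re / 2 < s.re} ∩ Metric.ball 0 (‖z‖ + 1) with hU
  have hUopen : IsOpen U := ((isOpen_lt continuous_const Complex.continuous_re).inter
    Metric.isOpen_ball)
  have hzU : z ∈ U := ⟨by simpa using by linarith, by simp⟩
  have hdiff : DifferentiableOn ℂ (fun w => ∑' k : ℕ, F k w) U := by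
    refine differentiableOn_tsum_of_summable_norm
      (u := fun k => (‖z‖ + 1) * ((2 * k + 1 : ℝ)) ^ (-(z.re / 2) - 1))
      (((summable_bound (by linarith)).mul_left _)) (fun k => ?_) hUopen (fun k w hw => ?_)
    · intro w _
      refine DifferentiableAt.differentiableWithinAt ?_
      refine DifferentiableAt.sub ?_ ?_ <;>
        exact (differentiableAt_id.neg).const_cpow (Or.inl (Nat.cast_ne_zero.mpr (by omega)))
    · have hw1 : 0 < w.re := lt_trans (by linarith) hw.1
      refine (F_bound hw1 k).trans ?_
      have h1 : ‖w‖ ≤ ‖z‖ + 1 := by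
        have := hw.2
        simp only [Metric.mem_ball, dist_zero_right] at this
        linarith
      have h2 : ((2 * k + 1 : ℝ)) ^ (-w.re - 1) ≤ ((2 * k + 1 : ℝ)) ^ (-(z.re / 2) - 1) := by
        apply Real.rpow_le_rpow_of_exponent_le (by push_cast; linarith)
        have := hw.1
        simp only [Set.mem_setOf_eq] at this
        linarith
      have h3 : (0:ℝ) ≤ ((2 * k + 1 : ℝ)) ^ (-w.re - 1) := Real.rpow_nonneg (by positivity) _
      nlinarith [norm_nonneg w, Real.rpow_nonneg (show (0:ℝ) ≤ 2*k+1 by positivity) (-(z.re/2)-1)]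
  exact ((hdiff z hzU).differentiableAt (hUopen.mem_nhds hzU))

/-- The function on `ZMod 2` realizing the alternating signs. -/
noncomputable def Φ : ZMod 2 → ℂ := fun j => if j = 1 then 1 else -1

lemma Φ_sum : ∑ j, Φ j = 0 := by
  have huniv : (Finset.univ : Finset (ZMod 2)) = {0, 1} := by decide
  rw [huniv, Finset.sum_insert (by decide), Finset.sum_singleton]
  simp [Φ, show (0 : ZMod 2) ≠ 1 by decide]

lemma Φ_apply (n : ℕ) : Φ ((n + 1 : ℕ) : ZMod 2) = (-1 : ℂ) ^ n := by
  rcases Nat.even_or_odd n with ⟨m, hm⟩ | ⟨m, hm⟩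
  · subst hm
    have hcast : ((m + m + 1 : ℕ) : ZMod 2) = 1 := by
      push_cast
      rw [← two_mul]
      simp [show (2 : ZMod 2) = 0 from CharTwo.two_eq_zero]
    rw [hcast, Even.neg_one_pow ⟨m, rfl⟩]
    simp [Φ]
  · subst hm
    have hcast : ((2 * m + 1 + 1 : ℕ) : ZMod 2) = 0 := by
      push_cast
      simp [show (2 : ZMod 2) = 0 from CharTwo.two_eq_zero]
      decide
    rw [hcast, Odd.neg_one_pow ⟨m, rfl⟩]
    simp [Φ, show (0 : ZMod 2) ≠ 1 by decide]

lemma summable_a {s : ℂ} (hs : 1 < s.re) : Summable (fun n => a s n) := by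
  refine Summable.of_norm ?_
  have h0 : Summable (fun n : ℕ => (n : ℝ) ^ (-s.re)) :=
    Real.summable_nat_rpow.mpr (by linarith)
  have h1 := (summable_nat_add_iff (f := fun n : ℕ => (n : ℝ) ^ (-s.re)) 1).mpr h0
  refine h1.congr fun n => ?_
  rw [norm_a]

lemma G_eq_tsum_a {s : ℂ} (hs : 1 < s.re) : G s = ∑' n, a s n := by
  have h := summable_a hs
  have he : Summable (fun k => a s (2 * k)) := h.comp_injective (fun x y hxy => by omega)
  have ho : Summable (fun k => a s (2 * k + 1)) := h.comp_injective (fun x y hxy => by omega)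
  calc G s = ∑' k, (a s (2 * k) + a s (2 * k + 1)) := by
        rw [G]; exact tsum_congr fun k => F_eq k s
    _ = (∑' k, a s (2 * k)) + ∑' k, a s (2 * k + 1) := he.tsum_add ho
    _ = ∑' n, a s n := tsum_even_add_odd he ho

lemma tsum_a_eq_LFunction {s : ℂ} (hs : 1 < s.re) :
    ∑' n, a s n = ZMod.LFunction Φ s := by
  rw [ZMod.LFunction_eq_LSeries Φ hs, LSeries,
    Summable.tsum_eq_zero_add (ZMod.LSeriesSummable_of_one_lt_re Φ hs), LSeries.term_zero, zero_add]
  refine tsum_congr fun n => ?_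
  rw [LSeries.term_of_ne_zero (Nat.succ_ne_zero n), a, Φ_apply, cpow_neg, div_eq_mul_inv]

lemma G_eq_LFunction {z : ℂ} (hz : 0 < z.re) : G z = ZMod.LFunction Φ z := by
  have hopen : IsOpen {s : ℂ | 0 < s.re} := continuous_re.isOpen_preimage _ isOpen_Ioi
  have hG : AnalyticOnNhd ℂ G {s : ℂ | 0 < s.re} :=
    DifferentiableOn.analyticOnNhd
      (fun s hs => (differentiableAt_G hs).differentiableWithinAt) hopen
  have hL : AnalyticOnNhd ℂ (ZMod.LFunction Φ) {s : ℂ | 0 < s.re} :=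
    DifferentiableOn.analyticOnNhd
      ((ZMod.differentiable_LFunction_of_sum_zero Φ_sum).differentiableOn) hopen
  have hV : {s : ℂ | 1 < s.re} ∈ nhds (2 : ℂ) :=
    (continuous_re.isOpen_preimage _ isOpen_Ioi).mem_nhds (by norm_num)
  refine hG.eqOn_of_preconnected_of_eventuallyEq hL
    (convex_halfSpace_re_gt 0).isPreconnected (show (2:ℂ) ∈ _ by norm_num) ?_ hz
  filter_upwards [hV] with w hw
  rw [G_eq_tsum_a hw, tsum_a_eq_LFunction hw]

lemma two_mul_cast_cpow {s : ℂ} (n : ℕ) :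
    ((2 * n : ℕ) : ℂ) ^ (-s) = (2 : ℂ) ^ (-s) * ((n : ℕ) : ℂ) ^ (-s) := by
  have h := mul_cpow_ofReal_nonneg (a := 2) (b := (n : ℝ)) (by norm_num)
    (Nat.cast_nonneg n) (-s)
  push_cast at h ⊢
  exact h

lemma LFunction_eq_eta_zeta_of_one_lt {s : ℂ} (hs : 1 < s.re) :
    ZMod.LFunction Φ s = (1 - (2 : ℂ) ^ ((1 : ℂ) - s)) * riemannZeta s := by
  classical
  set d : ℕ → ℂ := fun n => ((n + 1 : ℕ) : ℂ) ^ (-s) with hd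
  have hdsum : Summable d := by
    have := summable_a (s := s) hs
    refine Summable.of_norm ?_
    refine (this.norm.congr fun n => ?_)
    rw [norm_a, hd]
    simp only [norm_nat_cpow (Nat.succ_pos n)]
  have hde : Summable (fun k => d (2 * k)) := hdsum.comp_injective (fun x y h => by omega)
  have hdo : Summable (fun k => d (2 * k + 1)) := hdsum.comp_injective (fun x y h => by omega)
  have hzeta : riemannZeta s = ∑' n, d n := by
    rw [zeta_eq_tsum_one_div_nat_add_one_cpow hs]
    refine tsum_congr fun n => ?_
    show 1 / ((n : ℂ) + 1) ^ s = ((n + 1 : ℕ) : ℂ) ^ (-s)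
    rw [cpow_neg, one_div]
    push_cast
    ring
  have hsplit : riemannZeta s = (∑' k, d (2 * k)) + ∑' k, d (2 * k + 1) := by
    rw [hzeta, tsum_even_add_odd hde hdo]
  have htwo : (2 : ℂ) ^ ((1 : ℂ) - s) * riemannZeta s = 2 * ∑' k, d (2 * k + 1) := by
    have hpow : (2 : ℂ) ^ ((1 : ℂ) - s) = 2 * (2 : ℂ) ^ (-s) := by
      rw [sub_eq_add_neg, cpow_add _ _ (two_ne_zero), cpow_one]
    rw [hpow, hzeta, mul_assoc, ← tsum_mul_left]
    congr 1
    refine tsum_congr fun n => ?_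
    show (2 : ℂ) ^ (-s) * ((n + 1 : ℕ) : ℂ) ^ (-s) = ((2 * n + 1 + 1 : ℕ) : ℂ) ^ (-s)
    rw [show (2 * n + 1 + 1 : ℕ) = 2 * (n + 1) by ring, two_mul_cast_cpow]
  have ha2 : ∀ k, a s (2 * k) = d (2 * k) := fun k => by
    show (-1 : ℂ) ^ (2 * k) * ((2 * k + 1 : ℕ) : ℂ) ^ (-s) = ((2 * k + 1 : ℕ) : ℂ) ^ (-s)
    rw [pow_mul]
    norm_num
  have ha2' : ∀ k, a s (2 * k + 1) = -d (2 * k + 1) := fun k => by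
    show (-1 : ℂ) ^ (2 * k + 1) * ((2 * k + 1 + 1 : ℕ) : ℂ) ^ (-s)
      = -(((2 * k + 1 + 1 : ℕ) : ℂ) ^ (-s))
    rw [pow_succ, pow_mul]
    norm_num
  rw [← tsum_a_eq_LFunction hs, ← G_eq_tsum_a hs, G]
  calc ∑' k, F k s = ∑' k, (a s (2 * k) + a s (2 * k + 1)) := tsum_congr fun k => F_eq k s
    _ = (∑' k, a s (2 * k)) + ∑' k, a s (2 * k + 1) := by
        have hea : Summable (fun k => a s (2 * k)) :=
          (summable_a hs).comp_injective (fun x y h => by omega)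
        have heo : Summable (fun k => a s (2 * k + 1)) :=
          (summable_a hs).comp_injective (fun x y h => by omega)
        exact hea.tsum_add heo
    _ = (∑' k, d (2 * k)) - ∑' k, d (2 * k + 1) := by
        rw [tsum_congr ha2, tsum_congr ha2', tsum_neg]
        ring
    _ = (1 - (2 : ℂ) ^ ((1 : ℂ) - s)) * riemannZeta s := by
        rw [sub_mul, one_mul, htwo, hsplit]
        ring

lemma LFunction_eq_eta_zeta {s : ℂ} (hs : s ≠ 1) :
    ZMod.LFunction Φ s = (1 - (2 : ℂ) ^ ((1 : ℂ) - s)) * riemannZeta s := by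
  set U : Set ℂ := {1}ᶜ with hU
  have hUo : IsOpen U := isOpen_compl_singleton
  have hUc : IsPreconnected U :=
    (isConnected_compl_singleton_of_one_lt_rank (by simp) _).isPreconnected
  have hf : AnalyticOnNhd ℂ (ZMod.LFunction Φ) U :=
    DifferentiableOn.analyticOnNhd
      ((ZMod.differentiable_LFunction_of_sum_zero Φ_sum).differentiableOn) hUo
  have hg : AnalyticOnNhd ℂ (fun s => (1 - (2 : ℂ) ^ ((1 : ℂ) - s)) * riemannZeta s) U := by
    refine DifferentiableOn.analyticOnNhd (fun u hu => ?_) hUo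
    refine DifferentiableAt.differentiableWithinAt (DifferentiableAt.mul ?_ ?_)
    · exact (differentiableAt_const _).sub
        (((differentiableAt_const _).sub differentiableAt_id).const_cpow (Or.inl two_ne_zero))
    · exact differentiableAt_riemannZeta hu
  have hV : {s : ℂ | 1 < s.re} ∈ nhds (2 : ℂ) :=
    (continuous_re.isOpen_preimage _ isOpen_Ioi).mem_nhds (by norm_num)
  refine hf.eqOn_of_preconnected_of_eventuallyEq hg hUc
    (show (2 : ℂ) ∈ U by simp [hU]) ?_ (show s ∈ U by simp [hU, hs])
  filter_upwards [hV] with w hw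
  exact LFunction_eq_eta_zeta_of_one_lt hw

lemma xiPartial_eq (n : ℕ) (z : ℂ) : xiPartial n z = ∑ j ∈ Finset.range n, a z j := by
  rw [xiPartial, ← Finset.Ico_add_one_right_eq_Icc, Finset.sum_Ico_eq_sum_range]
  refine Finset.sum_congr rfl fun j _ => ?_
  rw [a]
  congr 2
  · omega
  · push_cast; ring

lemma sum_range_F (z : ℂ) (m : ℕ) :
    ∑ j ∈ Finset.range m, F j z = ∑ j ∈ Finset.range (2 * m), a z j := by
  induction m with
  | zero => simp
  | succ k ih =>
    rw [Finset.sum_range_succ, ih, show 2 * (k + 1) = 2 * k + 1 + 1 by ring,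
      Finset.sum_range_succ, Finset.sum_range_succ, F_eq]
    ring

lemma tendsto_xiPartial {z : ℂ} (hz : 0 < z.re) :
    Tendsto (fun n => xiPartial n z) atTop (nhds (G z)) := by
  have hG : HasSum (fun k => F k z) (G z) := (summable_F hz).hasSum
  have hT : Tendsto (fun m => ∑ j ∈ Finset.range m, F j z) atTop (nhds (G z)) :=
    hG.tendsto_sum_nat
  have hdiv : Tendsto (fun n : ℕ => n / 2) atTop atTop :=
    Filter.tendsto_atTop_atTop.mpr fun b => ⟨2 * b, fun n hn => by omega⟩
  have h2 : Tendsto (fun n : ℕ => ∑ j ∈ Finset.range (2 * (n / 2)), a z j) atTop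
      (nhds (G z)) := by
    have := hT.comp hdiv
    refine this.congr fun n => ?_
    simp only [Function.comp]
    rw [sum_range_F]
  set R : ℕ → ℂ := fun n => ∑ j ∈ Finset.Ico (2 * (n / 2)) n, a z j with hR
  have hsum : ∀ n : ℕ, (∑ j ∈ Finset.range n, a z j)
      = (∑ j ∈ Finset.range (2 * (n / 2)), a z j) + R n := by
    intro n
    exact (Finset.sum_range_add_sum_Ico _ (show 2 * (n / 2) ≤ n by omega)).symm
  have hRbound : ∀ n : ℕ, 1 ≤ n → ‖R n‖ ≤ ((n : ℝ)) ^ (-z.re) := by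
    intro n hn
    rcases Nat.even_or_odd n with ⟨m, hm⟩ | ⟨m, hm⟩
    · have heq : 2 * (n / 2) = n := by omega
      simp only [hR]
      rw [heq]
      simp only [Finset.Ico_self, Finset.sum_empty, norm_zero]
      positivity
    · have h1 : 2 * (n / 2) = n - 1 := by omega
      have h2' : Finset.Ico (n - 1) n = {n - 1} := by
        rw [← Nat.Ico_succ_singleton, show n - 1 + 1 = n by omega]
      simp only [hR]
      rw [h1, h2', Finset.sum_singleton, norm_a, show n - 1 + 1 = n by omega]
  have hR0 : Tendsto R atTop (nhds 0) := by
    have hlim : Tendsto (fun n : ℕ => ((n : ℝ)) ^ (-z.re)) atTop (nhds 0) :=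
      (tendsto_rpow_neg_atTop hz).comp tendsto_natCast_atTop_atTop
    refine squeeze_zero_norm' ?_ hlim
    filter_upwards [eventually_ge_atTop 1] with n hn using hRbound n hn
  have := h2.add hR0
  rw [add_zero] at this
  refine Tendsto.congr (fun n => ?_) this
  rw [xiPartial_eq n z, ← hsum n]

end EtaAux

open EtaAux in
theorem alternating_series_eq_zeta (z : ℂ) (h0 : 0 < z.re) (h1 : z.re < 1)
    (hz : z ≠ 1) (h2 : (2 : ℂ) ^ ((1 : ℂ) - z) ≠ 1) :
    ∃ S : ℂ, Tendsto (fun n => xiPartial n z) atTop (nhds S) ∧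
      ((1 : ℂ) - (2 : ℂ) ^ ((1 : ℂ) - z))⁻¹ * S = riemannZeta z := by
  refine ⟨G z, tendsto_xiPartial h0, ?_⟩
  rw [G_eq_LFunction h0, LFunction_eq_eta_zeta hz, ← mul_assoc,
    inv_mul_cancel₀ (sub_ne_zero.mpr (Ne.symm h2)), one_mul]
end

section
/- For every complex z with Re z > 0 and every n ≥ 1, the tail of the alternating series satisfies |Σ_{k=n+1}^∞ (−1)^{k−1} k^{−z}| ≤ (1 + |z|/Re z) · n^{−Re z}. -/
open Finset Complex Filter

/-- Derivative of `t ↦ (t:ℂ)^(-z)` for `t > 0`. -/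
lemma aux_hasDerivAt_cpow (z : ℂ) {t : ℝ} (ht : 0 < t) :
    HasDerivAt (fun y : ℝ => (y : ℂ) ^ (-z)) (-z * (t : ℂ) ^ (-z - 1)) t := by
  have h0 : (t : ℂ) ∈ Complex.slitPlane := Or.inl (by simpa using ht)
  have := (Complex.hasStrictDerivAt_cpow_const (c := -z) h0).hasDerivAt.comp_ofReal
  simpa using this

/-- Mean value bound: `|a^{-z} - (a+1)^{-z}| ≤ (|z|/Re z) (a^{-σ} - (a+1)^{-σ})`. -/
lemma aux_diff_bound (z : ℂ) (hz : 0 < z.re) {a : ℝ} (ha : 1 ≤ a) :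
    ‖(a : ℂ) ^ (-z) - ((a + 1 : ℝ) : ℂ) ^ (-z)‖ ≤
      (‖z‖ / z.re) * (a ^ (-z.re) - (a + 1) ^ (-z.re)) := by
  have ha0 : 0 < a := lt_of_lt_of_le one_pos ha
  set σ := z.re with hσ
  set c := ‖z‖ / σ with hc
  have hderivB : ∀ x : ℝ, 0 < x →
      HasDerivAt (fun t : ℝ => c * (a ^ (-σ) - t ^ (-σ)))
        (‖z‖ * x ^ (-σ - 1)) x := by
    intro x hx0
    have hr := Real.hasDerivAt_rpow_const (x := x) (p := -σ) (Or.inl (ne_of_gt hx0))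
    have h := ((hasDerivAt_const x (c * a ^ (-σ))).sub (hr.const_mul c))
    have e : (fun t : ℝ => c * (a ^ (-σ) - t ^ (-σ))) =
        (fun x => c * a ^ (-σ)) - fun y => c * y ^ (-σ) := by
      ext t; simp only [Pi.sub_apply]; ring
    have hσ0 : σ ≠ 0 := hz.ne'
    have e2 : ‖z‖ * x ^ (-σ - 1) = 0 - c * (-σ * x ^ (-σ - 1)) := by
      calc ‖z‖ * x ^ (-σ - 1) = (‖z‖ / σ) * σ * x ^ (-σ - 1) := by
            rw [div_mul_cancel₀ _ hσ0]
        _ = 0 - c * (-σ * x ^ (-σ - 1)) := by rw [hc]; ring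
    rw [e, e2]
    exact h
  have key : ∀ ⦃x : ℝ⦄, x ∈ Set.Icc a (a + 1) →
      ‖(fun t : ℝ => (t : ℂ) ^ (-z) - (a : ℂ) ^ (-z)) x‖ ≤
        (fun t : ℝ => c * (a ^ (-σ) - t ^ (-σ))) x := by
    apply image_norm_le_of_norm_deriv_right_le_deriv_boundary'
      (f := fun t : ℝ => (t : ℂ) ^ (-z) - (a : ℂ) ^ (-z))
      (f' := fun t : ℝ => -z * (t : ℂ) ^ (-z - 1))
      (B := fun t : ℝ => c * (a ^ (-σ) - t ^ (-σ)))
      (B' := fun t : ℝ => ‖z‖ * t ^ (-σ - 1))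
    · intro x hx
      have hx0 : 0 < x := lt_of_lt_of_le ha0 hx.1
      exact (((aux_hasDerivAt_cpow z hx0).sub_const _).continuousAt).continuousWithinAt
    · intro x hx
      have hx0 : 0 < x := lt_of_lt_of_le ha0 hx.1
      exact ((aux_hasDerivAt_cpow z hx0).sub_const _).hasDerivWithinAt
    · simp
    · intro x hx
      have hx0 : 0 < x := lt_of_lt_of_le ha0 hx.1
      exact ((hderivB x hx0).continuousAt).continuousWithinAt
    · intro x hx
      have hx0 : 0 < x := lt_of_lt_of_le ha0 hx.1
      exact (hderivB x hx0).hasDerivWithinAt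
    · intro x hx
      have hx0 : 0 < x := lt_of_lt_of_le ha0 hx.1
      rw [norm_mul, norm_neg,
        Complex.norm_cpow_eq_rpow_re_of_pos hx0]
      simp [Complex.sub_re]
      exact le_rfl
  have h1 := key (x := a + 1) ⟨by linarith, le_rfl⟩
  have : ‖((a + 1 : ℝ) : ℂ) ^ (-z) - (a : ℂ) ^ (-z)‖ ≤
      c * (a ^ (-σ) - (a + 1) ^ (-σ)) := by
    simpa [mul_sub] using h1
  calc ‖(a : ℂ) ^ (-z) - ((a + 1 : ℝ) : ℂ) ^ (-z)‖
      = ‖((a + 1 : ℝ) : ℂ) ^ (-z) - (a : ℂ) ^ (-z)‖ := by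
        rw [← norm_neg, neg_sub]
    _ ≤ _ := this

/-- Summation by parts style identity for the alternating sum. -/
lemma aux_ident (z : ℂ) (n : ℕ) : ∀ M, n ≤ M →
    2 * ∑ k ∈ Ioc n (M + 1), (-1 : ℂ) ^ (k - 1) * (k : ℂ) ^ (-z) =
      (-1 : ℂ) ^ n * ((n + 1 : ℕ) : ℂ) ^ (-z) + (-1 : ℂ) ^ M * ((M + 1 : ℕ) : ℂ) ^ (-z) +
      ∑ k ∈ Ioc n M, (-1 : ℂ) ^ (k - 1) * ((k : ℂ) ^ (-z) - ((k + 1 : ℕ) : ℂ) ^ (-z)) := by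
  intro M hM
  induction M, hM using Nat.le_induction with
  | base =>
    rw [Nat.Ioc_succ_singleton, Finset.sum_singleton, Ioc_self, Finset.sum_empty]
    simp only [Nat.add_sub_cancel, add_zero]
    ring
  | succ M hM ih =>
    rw [Finset.sum_Ioc_succ_top (by omega : n ≤ M + 1), mul_add, ih,
      Finset.sum_Ioc_succ_top (by omega : n ≤ M)]
    have e1 : (M + 1 + 1) - 1 = M + 1 := by omega
    have e2 : (M + 1) - 1 = M := by omega
    rw [e1, e2]
    push_cast
    ring

/-- Telescoping. -/
lemma aux_tel (φ : ℕ → ℝ) (n : ℕ) : ∀ M, n ≤ M →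
    ∑ k ∈ Ioc n M, (φ k - φ (k + 1)) = φ (n + 1) - φ (M + 1) := by
  intro M hM
  induction M, hM using Nat.le_induction with
  | base => simp
  | succ M hM ih => rw [Finset.sum_Ioc_succ_top (by omega : n ≤ M), ih]; ring

theorem alternating_tail_bound (z : ℂ) (hz : 0 < z.re) (n : ℕ) (hn : 1 ≤ n)
    (S : ℂ) (hS : Tendsto (fun m => xiPartial m z) atTop (nhds S)) :
    ‖S - xiPartial n z‖ ≤ (1 + ‖z‖ / z.re) * (n : ℝ) ^ (-z.re) := by
  set σ := z.re with hσ
  set c := ‖z‖ / σ with hc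
  have hc0 : 0 ≤ c := div_nonneg (norm_nonneg _) hz.le
  set φ : ℕ → ℝ := fun k => (k : ℝ) ^ (-σ) with hφ
  have hφpos : ∀ k : ℕ, 1 ≤ k → 0 < φ k := fun k hk =>
    Real.rpow_pos_of_pos (by exact_mod_cast hk : (0:ℝ) < k) _
  have hφmono : ∀ k l : ℕ, 1 ≤ k → k ≤ l → φ l ≤ φ k := by
    intro k l hk hkl
    exact Real.rpow_le_rpow_of_nonpos (by exact_mod_cast hk) (by exact_mod_cast hkl)
      (neg_nonpos.2 hz.le)
  have habsw : ∀ k : ℕ, 1 ≤ k → ‖(k : ℂ) ^ (-z)‖ = φ k := by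
    intro k hk
    rw [← Complex.ofReal_natCast,
      Complex.norm_cpow_eq_rpow_re_of_pos (by exact_mod_cast hk) (-z)]
    simp [hφ, hσ]
  -- Bound on each partial tail
  have hbd : ∀ m, n ≤ m →
      ‖xiPartial m z - xiPartial n z‖ ≤ (1 + c) * φ n := by
    intro m hm
    rcases eq_or_lt_of_le hm with rfl | hlt
    · simp only [sub_self, norm_zero]
      positivity
    · have hdiff : xiPartial m z - xiPartial n z =
          ∑ k ∈ Ioc n m, (-1 : ℂ) ^ (k - 1) * (k : ℂ) ^ (-z) := by
        have h1 : xiPartial m z = ∑ k ∈ Ioc 0 m, (-1 : ℂ) ^ (k - 1) * (k : ℂ) ^ (-z) := by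
          unfold xiPartial; rw [← Finset.Icc_add_one_left_eq_Ioc]; rfl
        have h2 : xiPartial n z = ∑ k ∈ Ioc 0 n, (-1 : ℂ) ^ (k - 1) * (k : ℂ) ^ (-z) := by
          unfold xiPartial; rw [← Finset.Icc_add_one_left_eq_Ioc]; rfl
        rw [h1, h2, sub_eq_iff_eq_add']
        exact (Finset.sum_Ioc_consecutive _ (Nat.zero_le n) hlt.le).symm
      obtain ⟨M, hMn, rfl⟩ : ∃ M, n ≤ M ∧ m = M + 1 := ⟨m - 1, by omega, by omega⟩
      have hid := aux_ident z n M hMn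
      -- bound the difference sum
      have hterm : ∀ k ∈ Ioc n M,
          ‖(-1 : ℂ) ^ (k - 1) * ((k : ℂ) ^ (-z) - ((k + 1 : ℕ) : ℂ) ^ (-z))‖ ≤
            c * (φ k - φ (k + 1)) := by
        intro k hk
        rw [Finset.mem_Ioc] at hk
        have hk1 : (1 : ℝ) ≤ (k : ℝ) := by exact_mod_cast le_trans hn hk.1.le
        have := aux_diff_bound z hz hk1
        rw [norm_mul, norm_pow, norm_neg, norm_one, one_pow, one_mul]
        calc ‖(k : ℂ) ^ (-z) - ((k + 1 : ℕ) : ℂ) ^ (-z)‖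
            ≤ c * ((k : ℝ) ^ (-σ) - ((k : ℝ) + 1) ^ (-σ)) := by
              convert this using 3 <;> push_cast <;> ring
          _ = c * (φ k - φ (k + 1)) := by
              congr 2
              push_cast [hφ]
              ring_nf
      have hsum : ‖∑ k ∈ Ioc n M,
          (-1 : ℂ) ^ (k - 1) * ((k : ℂ) ^ (-z) - ((k + 1 : ℕ) : ℂ) ^ (-z))‖ ≤
            c * (φ (n + 1) - φ (M + 1)) := by
        calc ‖_‖ ≤ ∑ k ∈ Ioc n M, c * (φ k - φ (k + 1)) :=
              (norm_sum_le _ _).trans (Finset.sum_le_sum hterm)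
          _ = c * (φ (n + 1) - φ (M + 1)) := by
              rw [← Finset.mul_sum, aux_tel φ n M hMn]
      have h2T : 2 * ‖xiPartial (M + 1) z - xiPartial n z‖ ≤
          φ (n + 1) + φ (M + 1) + c * (φ (n + 1) - φ (M + 1)) := by
        have : (2 : ℝ) * ‖xiPartial (M + 1) z - xiPartial n z‖ =
            ‖2 * (xiPartial (M + 1) z - xiPartial n z)‖ := by
          rw [norm_mul]; norm_num
        rw [this, hdiff, hid]
        refine le_trans (norm_add_le _ _) ?_
        gcongr
        refine le_trans (norm_add_le _ _) ?_
        gcongr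
        · rw [norm_mul, norm_pow, norm_neg, norm_one, one_pow, one_mul,
            habsw (n + 1) (by omega)]
        · rw [norm_mul, norm_pow, norm_neg, norm_one, one_pow, one_mul,
            habsw (M + 1) (by omega)]
      have hφn1 : φ (n + 1) ≤ φ n := hφmono n (n + 1) hn (by omega)
      have hφM1 : φ (M + 1) ≤ φ n := hφmono n (M + 1) hn (by omega)
      have hφM1pos : 0 < φ (M + 1) := hφpos _ (by omega)
      have hφnpos : 0 < φ n := hφpos _ hn
      nlinarith [h2T, mul_le_mul_of_nonneg_left (sub_le_self (φ (n+1)) hφM1pos.le) hc0,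
        mul_le_mul_of_nonneg_left hφn1 hc0]
  have htend : Tendsto (fun m => ‖xiPartial m z - xiPartial n z‖) atTop
      (nhds (‖S - xiPartial n z‖)) :=
    (continuous_norm.tendsto _).comp (hS.sub tendsto_const_nhds)
  exact le_of_tendsto htend (eventually_atTop.2 ⟨n, hbd⟩)
end
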